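/- Let V be a real Hilbert space, φ_1, …, φ_n ∈ V, w_1, …, w_n ≥ 0, and let c : V → V be defined by c(v) = Σ_{i=1}^n w_i ⟨v, φ_i⟩ φ_i, with eigenvalues λ_1 ≥ λ_2 ≥ … ≥ λ_r > 0 (counted with multiplicity, and λ_k = 0 for k > r) associated to an orthonormal system of eigenvectors spanning the range of c. Then for every natural number N and every subspace W ⊆ V with dim W ≤ N, the weighted projection error satisfies Σ_{i=1}^n w_i ‖φ_i − P_W(φ_i)‖² ≥ Σ_{k=N+1}^{r} λ_k; consequently the span of the N leading eigenvectors of c minimizes the weighted projection error Σ_{i=1}^n w_i ‖φ_i − P_W(φ_i)‖² over all subspaces W of dimension at most N. -/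

import Mathlib

open scoped RealInnerProductSpace

private lemma aux_inner_sum_sum {E : Type*} [NormedAddCommGroup E] [InnerProductSpace ℝ E]
    {ι : Type*} [DecidableEq ι] (f : ι → E) (s : Finset ι)
    (h : ∀ j ∈ s, ∀ k ∈ s, ⟪f j, f k⟫ = if j = k then (1:ℝ) else 0)
    (cf df : ι → ℝ) :
    ⟪∑ j ∈ s, cf j • f j, ∑ k ∈ s, df k • f k⟫ = ∑ k ∈ s, cf k * df k := by
  rw [sum_inner]
  refine Finset.sum_congr rfl fun j hj => ?_
  rw [inner_sum]
  have : ∀ k ∈ s, ⟪cf j • f j, df k • f k⟫ = if k = j then cf j * df j else 0 := by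
    intro k hk
    rw [real_inner_smul_left, real_inner_smul_right, h j hj k hk]
    by_cases hkj : k = j
    · simp [hkj]
    · simp [hkj, Ne.symm hkj]
  rw [Finset.sum_congr rfl this, Finset.sum_ite_eq', if_pos hj]

private lemma aux_norm_sq_sum {E : Type*} [NormedAddCommGroup E] [InnerProductSpace ℝ E]
    {ι : Type*} [DecidableEq ι] (f : ι → E) (s : Finset ι)
    (h : ∀ j ∈ s, ∀ k ∈ s, ⟪f j, f k⟫ = if j = k then (1:ℝ) else 0)
    (cf : ι → ℝ) : ‖∑ k ∈ s, cf k • f k‖ ^ 2 = ∑ k ∈ s, cf k ^ 2 := by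
  rw [← real_inner_self_eq_norm_sq, aux_inner_sum_sum f s h cf cf]
  simp [sq]

private lemma aux_bessel {E : Type*} [NormedAddCommGroup E] [InnerProductSpace ℝ E]
    {ι : Type*} [DecidableEq ι] (f : ι → E) (s : Finset ι)
    (h : ∀ j ∈ s, ∀ k ∈ s, ⟪f j, f k⟫ = if j = k then (1:ℝ) else 0)
    (v : E) : ∑ k ∈ s, ⟪v, f k⟫ ^ 2 ≤ ‖v‖ ^ 2 := by
  have h0 : (0:ℝ) ≤ ‖v - ∑ k ∈ s, ⟪v, f k⟫ • f k‖ ^ 2 := by positivity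
  rw [norm_sub_sq_real, aux_norm_sq_sum f s h] at h0
  have hv : ⟪v, ∑ k ∈ s, ⟪v, f k⟫ • f k⟫ = ∑ k ∈ s, ⟪v, f k⟫ ^ 2 := by
    rw [inner_sum]
    simp [real_inner_smul_right, sq]
  rw [hv] at h0
  linarith

theorem weighted_POD_optimality
    {V : Type*} [NormedAddCommGroup V] [InnerProductSpace ℝ V] [CompleteSpace V]
    (n r : ℕ) (φ : Fin n → V) (w : Fin n → ℝ) (hw : ∀ i, 0 ≤ w i)
    (c : V → V) (hc : ∀ v, c v = ∑ i, (w i * ⟪v, φ i⟫) • φ i)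
    (ξ : ℕ → V) (lam : ℕ → ℝ)
    (horth : ∀ j k, j < r → k < r → ⟪ξ j, ξ k⟫ = if j = k then 1 else 0)
    (heig : ∀ k, k < r → c (ξ k) = lam k • ξ k)
    (hpos : ∀ k, k < r → 0 < lam k)
    (hdecr : ∀ j k, j ≤ k → k < r → lam k ≤ lam j)
    (hzero : ∀ k, r ≤ k → lam k = 0)
    (hrange : ∀ v, c v ∈ Submodule.span ℝ (ξ '' Set.Iio r))
    (N : ℕ)
    (W : Submodule ℝ V) [FiniteDimensional ℝ W] (hdim : Module.finrank ℝ W ≤ N)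
    (P : V → V) (hP : ∀ v, P v ∈ W ∧ v - P v ∈ Wᗮ)
    (Q : V → V)
    (hQ : ∀ v, Q v ∈ Submodule.span ℝ (ξ '' Set.Iio N) ∧
               v - Q v ∈ (Submodule.span ℝ (ξ '' Set.Iio N))ᗮ) :
    (∑ k ∈ Finset.Ico N r, lam k ≤ ∑ i, w i * ‖φ i - P (φ i)‖ ^ 2) ∧
    (∑ i, w i * ‖φ i - Q (φ i)‖ ^ 2 ≤ ∑ i, w i * ‖φ i - P (φ i)‖ ^ 2) := by
  classical
  -- orthonormality restricted to `range r`
  have horth' : ∀ j ∈ Finset.range r, ∀ k ∈ Finset.range r,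
      ⟪ξ j, ξ k⟫ = if j = k then (1:ℝ) else 0 := by
    intro j hj k hk
    exact horth j k (Finset.mem_range.mp hj) (Finset.mem_range.mp hk)
  -- inner product against c
  have H1 : ∀ v u : V, ⟪c v, u⟫ = ∑ i, w i * ⟪v, φ i⟫ * ⟪φ i, u⟫ := by
    intro v u
    rw [hc, sum_inner]
    refine Finset.sum_congr rfl fun i _ => ?_
    rw [real_inner_smul_left]
  -- kill lemma
  have H2 : ∀ v : V, (∀ k, k < r → ⟪v, ξ k⟫ = 0) → ∀ i, w i * ⟪v, φ i⟫ = 0 := by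
    intro v hv
    have hgen : ∀ x ∈ Submodule.span ℝ (ξ '' Set.Iio r), (⟪x, v⟫ : ℝ) = 0 := by
      intro x hx
      induction hx using Submodule.span_induction with
      | mem x hx =>
        obtain ⟨k, hk, rfl⟩ := hx
        rw [real_inner_comm]; exact hv k hk
      | zero => simp
      | add x y hx hy ihx ihy => rw [inner_add_left, ihx, ihy]; ring
      | smul a x hx ihx => rw [real_inner_smul_left, ihx]; ring
    have hcv : ⟪c v, v⟫ = (0:ℝ) := hgen _ (hrange v)
    rw [H1] at hcv
    have hnn : ∀ i ∈ Finset.univ, (0:ℝ) ≤ w i * ⟪v, φ i⟫ * ⟪φ i, v⟫ := by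
      intro i _
      rw [real_inner_comm v (φ i), mul_assoc]
      exact mul_nonneg (hw i) (mul_self_nonneg _)
    have heach := (Finset.sum_eq_zero_iff_of_nonneg hnn).mp hcv
    intro i
    have h0 := heach i (Finset.mem_univ i)
    rw [real_inner_comm v (φ i)] at h0
    have hsq : (w i * ⟪v, φ i⟫) ^ 2 = 0 := by
      have hh : (w i * ⟪v, φ i⟫) ^ 2 = w i * (w i * ⟪v, φ i⟫ * ⟪v, φ i⟫) := by ring
      rw [hh, h0, mul_zero]
    exact pow_eq_zero_iff (by norm_num) |>.mp hsq
  -- eigen identity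
  have H3' : ∀ (v : V) (k : ℕ), k < r →
      ∑ i, w i * ⟪v, φ i⟫ * ⟪φ i, ξ k⟫ = lam k * ⟪v, ξ k⟫ := by
    intro v k hk
    have h1 := H1 v (ξ k)
    have h2 := H1 (ξ k) v
    have h3 : ⟪c v, ξ k⟫ = ⟪c (ξ k), v⟫ := by
      rw [h1, h2]
      refine Finset.sum_congr rfl fun i _ => ?_
      rw [real_inner_comm (φ i) v, real_inner_comm (ξ k) (φ i)]; ring
    rw [← h1, h3, heig k hk, real_inner_smul_left, real_inner_comm v (ξ k)]
  have H3sq : ∀ k, k < r → ∑ i, w i * ⟪φ i, ξ k⟫ ^ 2 = lam k := by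
    intro k hk
    have := H3' (ξ k) k hk
    rw [horth k k hk hk, if_pos rfl, mul_one] at this
    rw [← this]
    refine Finset.sum_congr rfl fun i _ => ?_
    rw [real_inner_comm (ξ k) (φ i)]; ring
  -- perp of partial expansion
  have Hperp : ∀ (v : V) (k : ℕ), k < r →
      ⟪v - ∑ k' ∈ Finset.range r, ⟪v, ξ k'⟫ • ξ k', ξ k⟫ = 0 := by
    intro v k hk
    rw [inner_sub_left, sum_inner]
    have : ∀ k' ∈ Finset.range r, ⟪(⟪v, ξ k'⟫ : ℝ) • ξ k', ξ k⟫
        = if k' = k then ⟪v, ξ k⟫ else 0 := by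
      intro k' hk'
      rw [real_inner_smul_left, horth k' k (Finset.mem_range.mp hk') hk]
      by_cases h : k' = k
      · simp [h]
      · simp [h]
    rw [Finset.sum_congr rfl this, Finset.sum_ite_eq', if_pos (Finset.mem_range.mpr hk)]
    ring
  -- residuals
  set ρ : Fin n → V := fun i => φ i - ∑ k ∈ Finset.range r, ⟪φ i, ξ k⟫ • ξ k with hρdef
  have Hρ1 : ∀ (i : Fin n) (k : ℕ), k < r → ⟪ρ i, ξ k⟫ = 0 := fun i k hk => Hperp (φ i) k hk
  have Hρdecomp : ∀ i : Fin n, φ i = (∑ k ∈ Finset.range r, ⟪φ i, ξ k⟫ • ξ k) + ρ i := by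
    intro i; simp only [hρdef]; abel
  have Hρnorm : ∀ i, w i * ‖ρ i‖ ^ 2 = 0 := by
    intro i
    have h1 : w i * ⟪ρ i, φ i⟫ = 0 := H2 (ρ i) (Hρ1 i) i
    have h2 : ⟪ρ i, φ i⟫ = ‖ρ i‖ ^ 2 := by
      conv_lhs => rw [Hρdecomp i]
      rw [inner_add_right, inner_sum]
      have : ∀ k ∈ Finset.range r, ⟪ρ i, (⟪φ i, ξ k⟫ : ℝ) • ξ k⟫ = 0 := by
        intro k hk
        rw [real_inner_smul_right, Hρ1 i k (Finset.mem_range.mp hk)]; ring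
      rw [Finset.sum_congr rfl this, Finset.sum_const_zero, zero_add,
        real_inner_self_eq_norm_sq]
    rw [h2] at h1; exact h1
  -- norm decomposition of φ i
  have Hnormφ : ∀ i : Fin n,
      ‖φ i‖ ^ 2 = (∑ k ∈ Finset.range r, ⟪φ i, ξ k⟫ ^ 2) + ‖ρ i‖ ^ 2 := by
    intro i
    conv_lhs => rw [Hρdecomp i]
    rw [norm_add_sq_real, aux_norm_sq_sum ξ _ horth' _]
    have hz : ⟪∑ k ∈ Finset.range r, ⟪φ i, ξ k⟫ • ξ k, ρ i⟫ = 0 := by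
      rw [sum_inner]
      refine Finset.sum_eq_zero fun k hk => ?_
      rw [real_inner_smul_left, real_inner_comm (ρ i) (ξ k), Hρ1 i k (Finset.mem_range.mp hk)]; ring
    rw [hz]; ring
  -- trace identity
  have Htrace : ∑ i, w i * ‖φ i‖ ^ 2 = ∑ k ∈ Finset.range r, lam k := by
    have h1 : ∀ i : Fin n, w i * ‖φ i‖ ^ 2
        = ∑ k ∈ Finset.range r, w i * ⟪φ i, ξ k⟫ ^ 2 := by
      intro i
      rw [Hnormφ i, mul_add, Hρnorm i, add_zero, Finset.mul_sum]
    rw [Finset.sum_congr rfl fun i _ => h1 i, Finset.sum_comm]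
    exact Finset.sum_congr rfl fun k hk => H3sq k (Finset.mem_range.mp hk)
  -- Rayleigh expansion
  have HRay : ∀ v : V, ∑ i, w i * ⟪v, φ i⟫ * ⟪φ i, v⟫
      = ∑ k ∈ Finset.range r, lam k * ⟪v, ξ k⟫ ^ 2 := by
    intro v
    have hgkill := H2 (v - ∑ k ∈ Finset.range r, ⟪v, ξ k⟫ • ξ k) (Hperp v)
    have hstep : ∀ i : Fin n, w i * ⟪v, φ i⟫ * ⟪φ i, v⟫
        = ∑ k ∈ Finset.range r, ⟪v, ξ k⟫ * (w i * ⟪ξ k, φ i⟫ * ⟪φ i, v⟫) := by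
      intro i
      have hsplit : (⟪v, φ i⟫ : ℝ)
          = (∑ k ∈ Finset.range r, ⟪v, ξ k⟫ * ⟪ξ k, φ i⟫)
            + ⟪v - ∑ k ∈ Finset.range r, ⟪v, ξ k⟫ • ξ k, φ i⟫ := by
        rw [inner_sub_left, sum_inner]
        have : ∀ k ∈ Finset.range r, ⟪(⟪v, ξ k⟫ : ℝ) • ξ k, φ i⟫
            = ⟪v, ξ k⟫ * ⟪ξ k, φ i⟫ := fun k _ => real_inner_smul_left _ _ _
        rw [Finset.sum_congr rfl this]; ring
      have hkill := hgkill i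
      calc w i * ⟪v, φ i⟫ * ⟪φ i, v⟫
          = (w i * ((∑ k ∈ Finset.range r, ⟪v, ξ k⟫ * ⟪ξ k, φ i⟫))
              + w i * ⟪v - ∑ k ∈ Finset.range r, ⟪v, ξ k⟫ • ξ k, φ i⟫) * ⟪φ i, v⟫ := by
            rw [hsplit]; ring
        _ = (w i * ((∑ k ∈ Finset.range r, ⟪v, ξ k⟫ * ⟪ξ k, φ i⟫))) * ⟪φ i, v⟫ := by
            rw [hkill]; ring
        _ = ∑ k ∈ Finset.range r, ⟪v, ξ k⟫ * (w i * ⟪ξ k, φ i⟫ * ⟪φ i, v⟫) := by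
            rw [Finset.mul_sum, Finset.sum_mul]
            exact Finset.sum_congr rfl fun k _ => by ring
    rw [Finset.sum_congr rfl fun i _ => hstep i, Finset.sum_comm]
    refine Finset.sum_congr rfl fun k hk => ?_
    have hk' := Finset.mem_range.mp hk
    rw [← Finset.mul_sum]
    have : ∑ i, w i * ⟪ξ k, φ i⟫ * ⟪φ i, v⟫ = ∑ i, w i * ⟪v, φ i⟫ * ⟪φ i, ξ k⟫ := by
      refine Finset.sum_congr rfl fun i _ => ?_
      rw [real_inner_comm (ξ k) (φ i), real_inner_comm (φ i) v]; ring
    rw [this, H3' v k hk']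
    ring
  -- projection error pointwise
  have HPn : ∀ v : V, ‖v - P v‖ ^ 2 = ‖v‖ ^ 2 - ‖P v‖ ^ 2 := by
    intro v
    have hip : ⟪P v, v - P v⟫ = 0 :=
      Submodule.inner_right_of_mem_orthogonal (hP v).1 (hP v).2
    have hv : ‖v‖ ^ 2 = ‖P v + (v - P v)‖ ^ 2 := by rw [add_sub_cancel]
    rw [norm_add_sq_real, hip] at hv
    linarith
  -- orthonormal basis of W
  set m := Module.finrank ℝ W with hm
  set e := stdOrthonormalBasis ℝ W with he
  set E : Fin m → V := fun j => (e j : V) with hE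
  have hEorth : ∀ j ∈ (Finset.univ : Finset (Fin m)), ∀ k ∈ (Finset.univ : Finset (Fin m)),
      ⟪E j, E k⟫ = if j = k then (1:ℝ) else 0 := by
    intro j _ k _
    have := orthonormal_iff_ite.mp e.orthonormal j k
    rw [Submodule.coe_inner] at this
    simpa [hE] using this
  -- expansion of ‖P v‖²
  have HPexp : ∀ v : V, ‖P v‖ ^ 2 = ∑ j, ⟪v, E j⟫ ^ 2 := by
    intro v
    set p : W := ⟨P v, (hP v).1⟩ with hp
    have hPv : P v = (p : V) := rfl
    have hrepr : (p : V) = ∑ j, ⟪E j, (p : V)⟫ • E j := by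
      have h := congrArg (Subtype.val : W → V) (e.sum_repr' p)
      rw [AddSubmonoidClass.coe_finset_sum] at h
      conv_lhs => rw [← h]
      refine Finset.sum_congr rfl fun j _ => ?_
      rw [Submodule.coe_smul, Submodule.coe_inner]
    have hcoef : ∀ j, ⟪E j, (p : V)⟫ = ⟪v, E j⟫ := by
      intro j
      have hEj : E j ∈ W := (e j).2
      have h0 : ⟪E j, v - P v⟫ = 0 :=
        Submodule.inner_right_of_mem_orthogonal hEj (hP v).2
      have : (⟪E j, v⟫ : ℝ) = ⟪E j, P v⟫ + ⟪E j, v - P v⟫ := by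
        rw [← inner_add_right]; congr 1; abel
      rw [h0, add_zero] at this
      rw [hPv] at this
      rw [← this]
      exact real_inner_comm v (E j)
    rw [hPv, hrepr]
    rw [Finset.sum_congr rfl fun j (_ : j ∈ Finset.univ) => by rw [hcoef j]]
    exact aux_norm_sq_sum E Finset.univ hEorth _
  -- the numbers t k
  set t : ℕ → ℝ := fun k => ∑ j, ⟪E j, ξ k⟫ ^ 2 with ht
  have ht_nonneg : ∀ k, 0 ≤ t k := by
    intro k; simp only [ht]; positivity
  have hE_unit : ∀ j : Fin m, ‖E j‖ ^ 2 = 1 := by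
    intro j
    have := hEorth j (Finset.mem_univ j) j (Finset.mem_univ j)
    rw [if_pos rfl] at this
    rw [← real_inner_self_eq_norm_sq, this]
  have ht_le_one : ∀ k, k < r → t k ≤ 1 := by
    intro k hk
    have hb := aux_bessel E Finset.univ hEorth (ξ k)
    have hξ : ‖ξ k‖ ^ 2 = 1 := by
      rw [← real_inner_self_eq_norm_sq, horth k k hk hk, if_pos rfl]
    rw [hξ] at hb
    simp only [ht]
    calc ∑ j, ⟪E j, ξ k⟫ ^ 2 = ∑ j, ⟪ξ k, E j⟫ ^ 2 := by
          refine Finset.sum_congr rfl fun j _ => by rw [real_inner_comm]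
      _ ≤ 1 := hb
  -- min N r and mu
  set N' := min N r with hN'
  have hN'r : N' ≤ r := min_le_right _ _
  have hsum_t : ∑ k ∈ Finset.range r, t k ≤ (N' : ℝ) := by
    have h1 : ∑ k ∈ Finset.range r, t k ≤ (m : ℝ) := by
      have hswap : ∑ k ∈ Finset.range r, t k
          = ∑ j : Fin m, ∑ k ∈ Finset.range r, ⟪E j, ξ k⟫ ^ 2 := by
        simp only [ht]; exact Finset.sum_comm
      rw [hswap]
      calc ∑ j : Fin m, ∑ k ∈ Finset.range r, ⟪E j, ξ k⟫ ^ 2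
          ≤ ∑ j : Fin m, ‖E j‖ ^ 2 :=
            Finset.sum_le_sum fun j _ => aux_bessel ξ (Finset.range r) horth' (E j)
        _ = (m : ℝ) := by
            rw [Finset.sum_congr rfl fun j _ => hE_unit j]; simp
    have h2 : ∑ k ∈ Finset.range r, t k ≤ (r : ℝ) := by
      calc ∑ k ∈ Finset.range r, t k ≤ ∑ k ∈ Finset.range r, (1:ℝ) :=
            Finset.sum_le_sum fun k hk => ht_le_one k (Finset.mem_range.mp hk)
        _ = (r : ℝ) := by simp
    rcases le_total N r with h | h
    · have : N' = N := min_eq_left h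
      rw [this]
      calc ∑ k ∈ Finset.range r, t k ≤ (m : ℝ) := h1
        _ ≤ (N : ℝ) := by exact_mod_cast hdim
    · have : N' = r := min_eq_right h
      rw [this]; exact h2
  set μ : ℝ := if N < r then lam N else 0 with hμ
  have hμ0 : 0 ≤ μ := by
    rw [hμ]; split
    · exact le_of_lt (hpos N (by assumption))
    · exact le_refl 0
  have hμle : ∀ k, k < N' → μ ≤ lam k := by
    intro k hk
    rw [hμ]; split
    · exact hdecr k N (le_of_lt (lt_of_lt_of_le hk (min_le_left _ _))) (by assumption)
    · exact le_of_lt (hpos k (lt_of_lt_of_le hk hN'r))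
  have hμge : ∀ k, N' ≤ k → k < r → lam k ≤ μ := by
    intro k hk1 hk2
    rw [hμ]; split
    · next h => exact hdecr N k (le_trans (le_of_eq (min_eq_left (le_of_lt h)).symm) hk1) hk2
    · next h =>
      exfalso
      have : N' = r := min_eq_right (not_lt.mp h)
      omega
  -- Ky Fan bound
  have hKyFan : ∑ k ∈ Finset.range r, lam k * t k ≤ ∑ k ∈ Finset.range N', lam k := by
    have hsplit : ∀ f : ℕ → ℝ, ∑ k ∈ Finset.range N', f k + ∑ k ∈ Finset.Ico N' r, f k
        = ∑ k ∈ Finset.range r, f k := by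
      intro f
      rw [Finset.range_eq_Ico, Finset.range_eq_Ico]
      exact Finset.sum_Ico_consecutive f (Nat.zero_le _) hN'r
    have hA : ∑ k ∈ Finset.range N', lam k * t k
        ≤ ∑ k ∈ Finset.range N', (lam k - μ + μ * t k) := by
      refine Finset.sum_le_sum fun k hk => ?_
      have h1 := hμle k (Finset.mem_range.mp hk)
      have h2 := ht_le_one k (lt_of_lt_of_le (Finset.mem_range.mp hk) hN'r)
      have h3 := ht_nonneg k
      nlinarith
    have hB : ∑ k ∈ Finset.Ico N' r, lam k * t k ≤ ∑ k ∈ Finset.Ico N' r, μ * t k := by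
      refine Finset.sum_le_sum fun k hk => ?_
      have hk' := Finset.mem_Ico.mp hk
      exact mul_le_mul_of_nonneg_right (hμge k hk'.1 hk'.2) (ht_nonneg k)
    have hA' : ∑ k ∈ Finset.range N', (lam k - μ + μ * t k)
        = ∑ k ∈ Finset.range N', lam k - N' * μ + μ * ∑ k ∈ Finset.range N', t k := by
      rw [Finset.sum_add_distrib, Finset.sum_sub_distrib, ← Finset.mul_sum,
        Finset.sum_const, Finset.card_range, nsmul_eq_mul]
    have hμt : μ * ∑ k ∈ Finset.range r, t k ≤ (N' : ℝ) * μ := by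
      rw [mul_comm ((N' : ℝ)) μ]
      exact mul_le_mul_of_nonneg_left hsum_t hμ0
    have e1 := hsplit (fun k => lam k * t k)
    have e2 : μ * ∑ k ∈ Finset.range N', t k + μ * ∑ k ∈ Finset.Ico N' r, t k
        = μ * ∑ k ∈ Finset.range r, t k := by
      rw [← mul_add, hsplit t]
    have e3 : ∑ k ∈ Finset.Ico N' r, μ * t k = μ * ∑ k ∈ Finset.Ico N' r, t k := by
      rw [Finset.mul_sum]
    linarith
  -- total projected mass
  have HPmass : ∑ i, w i * ‖P (φ i)‖ ^ 2 = ∑ k ∈ Finset.range r, lam k * t k := by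
    have h1 : ∀ i : Fin n, w i * ‖P (φ i)‖ ^ 2 = ∑ j, w i * ⟪φ i, E j⟫ ^ 2 := by
      intro i; rw [HPexp (φ i), Finset.mul_sum]
    rw [Finset.sum_congr rfl fun i _ => h1 i, Finset.sum_comm]
    have h2 : ∀ j : Fin m, ∑ i, w i * ⟪φ i, E j⟫ ^ 2
        = ∑ k ∈ Finset.range r, lam k * ⟪E j, ξ k⟫ ^ 2 := by
      intro j
      have := HRay (E j)
      rw [← this]
      refine Finset.sum_congr rfl fun i _ => ?_
      rw [real_inner_comm (E j) (φ i)]; ring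
    rw [Finset.sum_congr rfl fun j _ => h2 j, Finset.sum_comm]
    refine Finset.sum_congr rfl fun k _ => ?_
    simp only [ht]
    rw [Finset.mul_sum]
  -- error identity for P
  have HPerr : ∑ i, w i * ‖φ i - P (φ i)‖ ^ 2
      = ∑ k ∈ Finset.range r, lam k - ∑ k ∈ Finset.range r, lam k * t k := by
    have h1 : ∀ i : Fin n, w i * ‖φ i - P (φ i)‖ ^ 2
        = w i * ‖φ i‖ ^ 2 - w i * ‖P (φ i)‖ ^ 2 := by
      intro i; rw [HPn (φ i)]; ring
    rw [Finset.sum_congr rfl fun i _ => h1 i, Finset.sum_sub_distrib, Htrace, HPmass]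
  -- Ico sums
  have hIcoSum : ∑ k ∈ Finset.Ico N r, lam k
      = ∑ k ∈ Finset.range r, lam k - ∑ k ∈ Finset.range N', lam k := by
    rcases le_total N r with h | h
    · have hN'' : N' = N := min_eq_left h
      rw [hN'']
      have h2 := Finset.sum_Ico_consecutive lam (Nat.zero_le N) h
      rw [← Finset.range_eq_Ico, ← Finset.range_eq_Ico] at h2
      linarith [h2]
    · have hN'' : N' = r := min_eq_right h
      rw [hN'', Finset.Ico_eq_empty (by omega)]
      simp
  -- PART 1
  have part1 : ∑ k ∈ Finset.Ico N r, lam k ≤ ∑ i, w i * ‖φ i - P (φ i)‖ ^ 2 := by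
    rw [HPerr, hIcoSum]
    linarith
  refine ⟨part1, ?_⟩
  -- PART 2
  have hQbound : ∑ i, w i * ‖φ i - Q (φ i)‖ ^ 2 ≤ ∑ k ∈ Finset.Ico N r, lam k := by
    -- comparison vectors
    set y : Fin n → V := fun i => ∑ k ∈ Finset.range N', ⟪φ i, ξ k⟫ • ξ k with hy
    have hy_mem : ∀ i, y i ∈ Submodule.span ℝ (ξ '' Set.Iio N) := by
      intro i
      refine Submodule.sum_smul_mem _ _ fun k hk => ?_
      exact Submodule.subset_span ⟨k, lt_of_lt_of_le (Finset.mem_range.mp hk) (min_le_left _ _), rfl⟩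
    have hle : ∀ i, ‖φ i - Q (φ i)‖ ^ 2 ≤ ‖φ i - y i‖ ^ 2 := by
      intro i
      have hmemdiff : Q (φ i) - y i ∈ Submodule.span ℝ (ξ '' Set.Iio N) :=
        Submodule.sub_mem _ (hQ (φ i)).1 (hy_mem i)
      have hip : ⟪φ i - Q (φ i), Q (φ i) - y i⟫ = 0 := by
        rw [real_inner_comm]
        exact Submodule.inner_right_of_mem_orthogonal hmemdiff (hQ (φ i)).2
      have hdec : φ i - y i = (φ i - Q (φ i)) + (Q (φ i) - y i) := by abel
      rw [hdec, norm_add_sq_real, hip]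
      nlinarith [sq_nonneg ‖Q (φ i) - y i‖]
    have hyval : ∀ i, w i * ‖φ i - y i‖ ^ 2
        = ∑ k ∈ Finset.Ico N' r, w i * ⟪φ i, ξ k⟫ ^ 2 + w i * ‖ρ i‖ ^ 2 := by
      intro i
      have hIcosub : ∀ k ∈ Finset.Ico N' r, k < r := fun k hk => (Finset.mem_Ico.mp hk).2
      have hdec : φ i - y i = (∑ k ∈ Finset.Ico N' r, ⟪φ i, ξ k⟫ • ξ k) + ρ i := by
        have hsplit : ∑ k ∈ Finset.range N', (⟪φ i, ξ k⟫:ℝ) • ξ k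
            + ∑ k ∈ Finset.Ico N' r, (⟪φ i, ξ k⟫:ℝ) • ξ k
            = ∑ k ∈ Finset.range r, (⟪φ i, ξ k⟫:ℝ) • ξ k := by
          rw [Finset.range_eq_Ico, Finset.range_eq_Ico]
          exact Finset.sum_Ico_consecutive _ (Nat.zero_le _) hN'r
        have h4 : (∑ k ∈ Finset.range N', (⟪φ i, ξ k⟫:ℝ) • ξ k)
            + ((∑ k ∈ Finset.Ico N' r, (⟪φ i, ξ k⟫:ℝ) • ξ k) + ρ i) = φ i := by
          rw [← add_assoc, hsplit]
          exact (Hρdecomp i).symm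
        rw [sub_eq_iff_eq_add]
        simp only [hy]
        exact h4.symm.trans (add_comm _ _)
      have horthIco : ∀ j ∈ Finset.Ico N' r, ∀ k ∈ Finset.Ico N' r,
          ⟪ξ j, ξ k⟫ = if j = k then (1:ℝ) else 0 := by
        intro j hj k hk
        exact horth j k (hIcosub j hj) (hIcosub k hk)
      have hcross : ⟪∑ k ∈ Finset.Ico N' r, (⟪φ i, ξ k⟫:ℝ) • ξ k, ρ i⟫ = 0 := by
        rw [sum_inner]
        refine Finset.sum_eq_zero fun k hk => ?_
        rw [real_inner_smul_left, real_inner_comm (ρ i) (ξ k), Hρ1 i k (hIcosub k hk)]; ring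
      rw [hdec, norm_add_sq_real, hcross, aux_norm_sq_sum ξ _ horthIco, mul_zero,
        add_zero, mul_add, Finset.mul_sum]
    calc ∑ i, w i * ‖φ i - Q (φ i)‖ ^ 2
        ≤ ∑ i, w i * ‖φ i - y i‖ ^ 2 :=
          Finset.sum_le_sum fun i _ => mul_le_mul_of_nonneg_left (hle i) (hw i)
      _ = ∑ i, (∑ k ∈ Finset.Ico N' r, w i * ⟪φ i, ξ k⟫ ^ 2 + w i * ‖ρ i‖ ^ 2) :=
          Finset.sum_congr rfl fun i _ => hyval i
      _ = ∑ k ∈ Finset.Ico N' r, ∑ i, w i * ⟪φ i, ξ k⟫ ^ 2 := by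
          rw [Finset.sum_add_distrib, Finset.sum_congr rfl fun i _ => Hρnorm i,
            Finset.sum_const_zero, add_zero, Finset.sum_comm]
      _ = ∑ k ∈ Finset.Ico N' r, lam k :=
          Finset.sum_congr rfl fun k hk => H3sq k (Finset.mem_Ico.mp hk).2
      _ = ∑ k ∈ Finset.Ico N r, lam k := by
          rcases le_total N r with h | h
          · rw [hN', min_eq_left h]
          · have h1 : Finset.Ico N' r = ∅ := Finset.Ico_eq_empty (by omega)
            have h2 : Finset.Ico N r = ∅ := Finset.Ico_eq_empty (by omega)
            rw [h1, h2]
  linarith [hQbound, part1]
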